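/- Let C be an algebraically closed field of characteristic zero, let C(x) be its field of rational functions with the derivation ' determined by x' = 1 and c' = 0 for all c ∈ C, and let h, p ∈ C(x). Suppose e ∈ C is a pole of h of order T ≥ 1 (i.e., ord_e(h) = −T). Then either ord_e(h' + p·h) ≤ −(T + 1), or p has a pole of order exactly 1 at e whose residue at e equals the image of T in C. -/

import Mathlib

open Polynomial RatFunc

section DerivLemmas
variable {C : Type*} [Field C] (δ : RatFunc C → RatFunc C)

lemma dzero (hadd : ∀ f g : RatFunc C, δ (f + g) = δ f + δ g) : δ 0 = 0 := by
  have h := hadd 0 0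
  simp only [add_zero] at h
  exact (left_eq_add.mp h)

lemma done (hmul : ∀ f g : RatFunc C, δ (f * g) = f * δ g + δ f * g) : δ 1 = 0 := by
  have h := hmul 1 1
  simp only [mul_one, one_mul] at h
  exact (left_eq_add.mp h)

lemma dneg (hadd : ∀ f g : RatFunc C, δ (f + g) = δ f + δ g) (f : RatFunc C) :
    δ (-f) = -δ f := by
  have h := hadd f (-f)
  simp only [add_neg_cancel, dzero δ hadd] at h
  exact eq_neg_of_add_eq_zero_right h.symm

lemma dsub (hadd : ∀ f g : RatFunc C, δ (f + g) = δ f + δ g) (f g : RatFunc C) :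
    δ (f - g) = δ f - δ g := by
  rw [sub_eq_add_neg, hadd, dneg δ hadd, sub_eq_add_neg]

lemma dpow (hmul : ∀ f g : RatFunc C, δ (f * g) = f * δ g + δ f * g)
    (f : RatFunc C) : ∀ n : ℕ, δ (f ^ (n + 1)) = (n + 1 : ℕ) * f ^ n * δ f := by
  intro n
  induction n with
  | zero => simp
  | succ k ih =>
      have : f ^ (k + 2) = f * f ^ (k + 1) := by ring
      rw [this, hmul, ih]
      push_cast
      ring

lemma dinv (hmul : ∀ f g : RatFunc C, δ (f * g) = f * δ g + δ f * g)
    {f : RatFunc C} (hf : f ≠ 0) : δ f⁻¹ = -δ f / f ^ 2 := by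
  have h0 : f * δ f⁻¹ + δ f * f⁻¹ = 0 := by
    rw [← hmul, mul_inv_cancel₀ hf, done δ hmul]
  have h1 := congrArg (· * f) h0
  simp only [add_mul, mul_assoc, inv_mul_cancel₀ hf, mul_one, zero_mul] at h1
  rw [eq_div_iff (pow_ne_zero _ hf)]
  linear_combination h1

lemma dalg (hadd : ∀ f g : RatFunc C, δ (f + g) = δ f + δ g)
    (hmul : ∀ f g : RatFunc C, δ (f * g) = f * δ g + δ f * g)
    (hX : δ RatFunc.X = 1) (hC : ∀ c : C, δ (RatFunc.C c) = 0)
    (q : Polynomial C) :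
    δ (algebraMap (Polynomial C) (RatFunc C) q)
      = algebraMap (Polynomial C) (RatFunc C) (derivative q) := by
  induction q using Polynomial.induction_on with
  | C c => simp [RatFunc.algebraMap_C, hC]
  | add p q hp hq => rw [map_add, hadd, hp, hq, derivative_add, map_add]
  | monomial n c _ =>
      rw [derivative_C_mul, derivative_X_pow]
      rw [map_mul, map_pow, RatFunc.algebraMap_C, RatFunc.algebraMap_X,
        hmul, dpow δ hmul, hC, hX]
      rw [map_mul, map_mul, map_pow,
        RatFunc.algebraMap_C, RatFunc.algebraMap_C, RatFunc.algebraMap_X,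
        map_natCast]
      push_cast
      ring

end DerivLemmas

set_option maxHeartbeats 1000000 in
lemma key_identity {F : Type*} [Field F] (Z A B A' B' A₁ B₁ zs zm σ : F)
    (hZ : Z ≠ 0) (hB : B ≠ 0) (hB₁ : B₁ ≠ 0) (hzs : zs ≠ 0) (hzm : zm ≠ 0) :
    (-(σ * zs) / (zs * Z) ^ 2) * (A * B⁻¹)
      + (zs * Z)⁻¹ * (A * (-B' / B ^ 2) + A' * B⁻¹)
      + (σ / Z + zm⁻¹ * (A₁ / B₁)) * ((zs * Z)⁻¹ * (A / B))
    = (zs * Z * zm)⁻¹ * ((A₁ * A * B + zm * (A' * B - A * B') * B₁) / (B ^ 2 * B₁)) := by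
  field_simp
  ring_nf

lemma order_decomp {C : Type*} [Field C] (e : C) (r : RatFunc C) (hr : r ≠ 0) :
    ∃ (n : ℤ) (a b : Polynomial C), a.eval e ≠ 0 ∧ b.eval e ≠ 0 ∧
      r = (RatFunc.X - RatFunc.C e) ^ n *
        (algebraMap (Polynomial C) (RatFunc C) a / algebraMap (Polynomial C) (RatFunc C) b) := by
  classical
  set alg := algebraMap (Polynomial C) (RatFunc C) with halg
  have hZalg : (RatFunc.X - RatFunc.C e : RatFunc C) = alg (Polynomial.X - Polynomial.C e) := by
    rw [halg, map_sub, RatFunc.algebraMap_X, RatFunc.algebraMap_C]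
  have hZ : (RatFunc.X - RatFunc.C e : RatFunc C) ≠ 0 := by
    rw [hZalg]; exact RatFunc.algebraMap_ne_zero (Polynomial.X_sub_C_ne_zero e)
  have hP : r.num ≠ 0 := RatFunc.num_ne_zero hr
  have hQ : r.denom ≠ 0 := r.denom_ne_zero
  set i := rootMultiplicity e r.num with hi
  set j := rootMultiplicity e r.denom with hj
  set P₁ := r.num /ₘ (Polynomial.X - Polynomial.C e) ^ i with hP₁
  set Q₁ := r.denom /ₘ (Polynomial.X - Polynomial.C e) ^ j with hQ₁
  have hfP : (Polynomial.X - Polynomial.C e) ^ i * P₁ = r.num :=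
    pow_mul_divByMonic_rootMultiplicity_eq _ e
  have hfQ : (Polynomial.X - Polynomial.C e) ^ j * Q₁ = r.denom :=
    pow_mul_divByMonic_rootMultiplicity_eq _ e
  have heP : P₁.eval e ≠ 0 := eval_divByMonic_pow_rootMultiplicity_ne_zero e hP
  have heQ : Q₁.eval e ≠ 0 := eval_divByMonic_pow_rootMultiplicity_ne_zero e hQ
  have hQ₁ne : alg Q₁ ≠ 0 := RatFunc.algebraMap_ne_zero (fun h0 => heQ (by simp [h0]))
  refine ⟨(i : ℤ) - j, P₁, Q₁, heP, heQ, ?_⟩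
  have hr' : r = alg r.num / alg r.denom := (RatFunc.num_div_denom r).symm
  rw [hr', ← hfP, ← hfQ, map_mul, map_mul, map_pow, map_pow, ← hZalg]
  rw [zpow_sub₀ hZ, zpow_natCast, zpow_natCast]
  field_simp

/-- `hasOrderAt e h n` means that the rational function `h` has `(x - e)`-adic
order exactly `n`, i.e. `h = (x - e)^n · u` where `u` has neither a zero nor a
pole at `e` (written as a quotient of polynomials not vanishing at `e`). -/
def hasOrderAt {C : Type*} [Field C] (e : C) (h : RatFunc C) (n : ℤ) : Prop :=
  ∃ a b : Polynomial C, a.eval e ≠ 0 ∧ b.eval e ≠ 0 ∧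
    h = (RatFunc.X - RatFunc.C e) ^ n *
      (algebraMap (Polynomial C) (RatFunc C) a / algebraMap (Polynomial C) (RatFunc C) b)

/-- **From the proof of Proposition 3.8 of the paper (bounds `T_N` in Algorithm 2).**
Let `C` be an algebraically closed field of characteristic zero and `'` the derivation
on `C(x)` with `x' = 1`, `c' = 0` for `c ∈ C`.  If `e ∈ C` is a pole of `h` of order
`T ≥ 1`, then either `ord_e (h' + p·h) ≤ −(T+1)`, or `p` has a pole of order exactly
`1` at `e` whose residue at `e` equals the image of `T` in `C`. -/
theorem pole_order_bound_or_simple_pole_residue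
    (C : Type*) [Field C] [IsAlgClosed C] [CharZero C]
    (δ : RatFunc C → RatFunc C)
    (hadd : ∀ f g : RatFunc C, δ (f + g) = δ f + δ g)
    (hmul : ∀ f g : RatFunc C, δ (f * g) = f * δ g + δ f * g)
    (hX : δ RatFunc.X = 1)
    (hC : ∀ c : C, δ (RatFunc.C c) = 0)
    (h p : RatFunc C) (e : C)
    (T : ℤ) (hT : 1 ≤ T)
    (hpole : hasOrderAt e h (-T)) :
    (∃ n : ℤ, n ≤ -(T + 1) ∧ hasOrderAt e (δ h + p * h) n) ∨
      (∃ g : RatFunc C,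
        (∃ a b : Polynomial C, b.eval e ≠ 0 ∧
          g = algebraMap (Polynomial C) (RatFunc C) a /
              algebraMap (Polynomial C) (RatFunc C) b) ∧
        p = RatFunc.C ((T : C)) / (RatFunc.X - RatFunc.C e) + g) := by
  classical
  obtain ⟨a, b, ha, hb, hh⟩ := hpole
  have hZalg : (RatFunc.X - RatFunc.C e : RatFunc C)
      = algebraMap (Polynomial C) (RatFunc C) (Polynomial.X - Polynomial.C e) := by
    rw [map_sub, RatFunc.algebraMap_X, RatFunc.algebraMap_C]
  have hZ : (RatFunc.X - RatFunc.C e : RatFunc C) ≠ 0 := by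
    rw [hZalg]; exact RatFunc.algebraMap_ne_zero (Polynomial.X_sub_C_ne_zero e)
  by_cases hg : ∃ a₀ b₀ : Polynomial C, b₀.eval e ≠ 0 ∧
      p - RatFunc.C ((T : C)) / (RatFunc.X - RatFunc.C e)
        = algebraMap (Polynomial C) (RatFunc C) a₀ / algebraMap (Polynomial C) (RatFunc C) b₀
  · right
    exact ⟨p - RatFunc.C ((T : C)) / (RatFunc.X - RatFunc.C e), hg, by ring⟩
  · left
    set r := p - RatFunc.C ((T : C)) / (RatFunc.X - RatFunc.C e) with hrdef
    have hr0 : r ≠ 0 := by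
      intro h0
      exact hg ⟨0, 1, by simp, by rw [h0]; simp⟩
    obtain ⟨n, a₁, b₁, ha₁, hb₁, hre⟩ := order_decomp e r hr0
    rcases lt_or_ge n 0 with hn | hn
    swap
    · exfalso
      apply hg
      refine ⟨(Polynomial.X - Polynomial.C e) ^ n.toNat * a₁, b₁, hb₁, ?_⟩
      have hzn : (RatFunc.X - RatFunc.C e : RatFunc C) ^ n
          = (RatFunc.X - RatFunc.C e) ^ n.toNat := by
        rw [← zpow_natCast, Int.toNat_of_nonneg hn]
      rw [hre, hzn, map_mul, map_pow, ← hZalg, mul_div_assoc]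
    -- now n < 0
    set m := (-n).toNat with hm
    have hm1 : 1 ≤ m := by omega
    have hnm : n = -(m : ℤ) := by omega
    set t := T.toNat with htdef
    have htT : (t : ℤ) = T := Int.toNat_of_nonneg (by omega)
    obtain ⟨s, hs⟩ : ∃ s : ℕ, t = s + 1 := ⟨t - 1, by omega⟩
    -- nonzeroness
    have hbne : b ≠ 0 := fun h0 => hb (by simp [h0])
    have hb₁ne : b₁ ≠ 0 := fun h0 => hb₁ (by simp [h0])
    have hB : algebraMap (Polynomial C) (RatFunc C) b ≠ 0 := RatFunc.algebraMap_ne_zero hbne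
    have hB₁ : algebraMap (Polynomial C) (RatFunc C) b₁ ≠ 0 := RatFunc.algebraMap_ne_zero hb₁ne
    have hZt : (RatFunc.X - RatFunc.C e : RatFunc C) ^ (s + 1) ≠ 0 := pow_ne_zero _ hZ
    -- rewrite h with nat powers
    have hhn : h = ((RatFunc.X - RatFunc.C e) ^ (s + 1))⁻¹ *
        (algebraMap (Polynomial C) (RatFunc C) a / algebraMap (Polynomial C) (RatFunc C) b) := by
      rw [hh, ← htT, zpow_neg, zpow_natCast, hs]
    have hrn : r = ((RatFunc.X - RatFunc.C e) ^ m)⁻¹ *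
        (algebraMap (Polynomial C) (RatFunc C) a₁ / algebraMap (Polynomial C) (RatFunc C) b₁) := by
      rw [hre, hnm, zpow_neg, zpow_natCast]
    -- derivative computations
    have hδZ : δ (RatFunc.X - RatFunc.C e) = 1 := by
      rw [dsub δ hadd, hX, hC]; ring
    have hδZt : δ ((RatFunc.X - RatFunc.C e) ^ (s + 1))
        = ((s : RatFunc C) + 1) * (RatFunc.X - RatFunc.C e) ^ s := by
      rw [dpow δ hmul, hδZ]; push_cast; ring
    have hδZtinv : δ (((RatFunc.X - RatFunc.C e) ^ (s + 1))⁻¹)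
        = -(((s : RatFunc C) + 1) * (RatFunc.X - RatFunc.C e) ^ s)
            / ((RatFunc.X - RatFunc.C e) ^ (s + 1)) ^ 2 := by
      rw [dinv δ hmul hZt, hδZt]
    have hδA : δ (algebraMap (Polynomial C) (RatFunc C) a)
        = algebraMap (Polynomial C) (RatFunc C) (derivative a) := dalg δ hadd hmul hX hC a
    have hδBinv : δ ((algebraMap (Polynomial C) (RatFunc C) b)⁻¹)
        = -(algebraMap (Polynomial C) (RatFunc C) (derivative b))
            / (algebraMap (Polynomial C) (RatFunc C) b) ^ 2 := by
      rw [dinv δ hmul hB, dalg δ hadd hmul hX hC b]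
    have hδh : δ h
        = (-(((s : RatFunc C) + 1) * (RatFunc.X - RatFunc.C e) ^ s)
            / ((RatFunc.X - RatFunc.C e) ^ (s + 1)) ^ 2)
            * (algebraMap (Polynomial C) (RatFunc C) a * (algebraMap (Polynomial C) (RatFunc C) b)⁻¹)
          + ((RatFunc.X - RatFunc.C e) ^ (s + 1))⁻¹ *
            (algebraMap (Polynomial C) (RatFunc C) a *
              (-(algebraMap (Polynomial C) (RatFunc C) (derivative b))
                / (algebraMap (Polynomial C) (RatFunc C) b) ^ 2)
             + algebraMap (Polynomial C) (RatFunc C) (derivative a)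
                * (algebraMap (Polynomial C) (RatFunc C) b)⁻¹) := by
      rw [hhn, div_eq_mul_inv, hmul, hmul, hδZtinv, hδBinv, hδA]
      ring
    -- express p
    have hTc : RatFunc.C ((T : C)) = (s : RatFunc C) + 1 := by
      rw [← htT, hs, Int.cast_natCast, map_natCast]
      push_cast
      ring
    have hp : p = ((s : RatFunc C) + 1) / (RatFunc.X - RatFunc.C e)
        + ((RatFunc.X - RatFunc.C e) ^ m)⁻¹ *
          (algebraMap (Polynomial C) (RatFunc C) a₁ / algebraMap (Polynomial C) (RatFunc C) b₁) := by
      rw [← hrn, ← hTc, hrdef]; ring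
    -- the key identity
    refine ⟨-(T + m), by omega, a₁ * a * b +
        (Polynomial.X - Polynomial.C e) ^ m * (derivative a * b - a * derivative b) * b₁,
      b ^ 2 * b₁, ?_, ?_, ?_⟩
    · have hmne : m ≠ 0 := by omega
      simp [Polynomial.eval_mul, Polynomial.eval_add, Polynomial.eval_sub, Polynomial.eval_pow,
        sub_self, zero_pow hmne, ha, hb, ha₁]
    · simp [Polynomial.eval_mul, Polynomial.eval_pow, hb, hb₁]
    · have hTm : (-(T + (m : ℤ))) = -(((s + 1 + m : ℕ) : ℤ)) := by omega
      rw [hTm, zpow_neg, zpow_natCast]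
      rw [hδh, hp, hhn]
      simp only [map_add, map_mul, map_sub, map_pow, RatFunc.algebraMap_X, RatFunc.algebraMap_C]
      linear_combination (norm := ring_nf) key_identity (RatFunc.X - RatFunc.C e)
        (algebraMap (Polynomial C) (RatFunc C) a) (algebraMap (Polynomial C) (RatFunc C) b)
        (algebraMap (Polynomial C) (RatFunc C) (derivative a))
        (algebraMap (Polynomial C) (RatFunc C) (derivative b))
        (algebraMap (Polynomial C) (RatFunc C) a₁) (algebraMap (Polynomial C) (RatFunc C) b₁)
        ((RatFunc.X - RatFunc.C e) ^ s) ((RatFunc.X - RatFunc.C e) ^ m)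
        ((s : RatFunc C) + 1) hZ hB hB₁ (pow_ne_zero _ hZ) (pow_ne_zero _ hZ)
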